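/- For every 0 < p < ∞, the set (ℓ^∞ \ ℓ^p) ∪ {0} contains a dense linear subspace of ℓ^∞ of dimension continuum. -/

import Mathlib

open Cardinal Set Filter

noncomputable section

namespace LinftyLpAux

abbrev X : Type := lp (fun _ : ℕ => ℝ) ⊤

lemma exists_q (r : ℝ) (n : ℕ) : ∃ t : ℚ, r < (t : ℝ) ∧ (t : ℝ) < r + 1 / (n + 1) :=
  exists_rat_btwn (lt_add_of_pos_right r (by positivity))

def qr (r : ℝ) (n : ℕ) : ℚ := (exists_q r n).choose

lemma qr_spec (r : ℝ) (n : ℕ) : r < (qr r n : ℝ) ∧ (qr r n : ℝ) < r + 1 / (n + 1) :=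
  (exists_q r n).choose_spec

def B (r : ℝ) : Set ℕ := Set.range fun n => Nat.pair n (Encodable.encode (qr r n))

lemma B_infinite (r : ℝ) : (B r).Infinite :=
  Set.infinite_range_of_injective fun n m h => ((Nat.pair_eq_pair).1 h).1

lemma B_inter_finite {r s : ℝ} (h : r ≠ s) : (B r ∩ B s).Finite := by
  have habs : 0 < |r - s| := abs_pos.2 (sub_ne_zero.2 h)
  apply Set.Finite.subset (Set.Finite.image (fun n => Nat.pair n (Encodable.encode (qr r n)))
    (Set.finite_Iio (⌈|r - s|⁻¹⌉₊)))
  rintro x ⟨⟨n, rfl⟩, ⟨m, hm⟩⟩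
  obtain ⟨hnm, henc⟩ := Nat.pair_eq_pair.1 hm.symm
  subst hnm
  have hq : qr s n = qr r n := Encodable.encode_injective henc.symm
  obtain ⟨h1, h2⟩ := qr_spec r n
  obtain ⟨h3, h4⟩ := qr_spec s n
  rw [hq] at h3 h4
  have hlt : |r - s| < 1 / (n + 1) := by
    rw [abs_sub_lt_iff]; constructor <;> linarith
  have hn : (n : ℝ) < |r - s|⁻¹ := by
    have h5 : |r - s| * (n + 1) < 1 := by
      rw [one_div] at hlt
      calc |r - s| * (n + 1) < ((n:ℝ) + 1)⁻¹ * (n + 1) := by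
            apply mul_lt_mul_of_pos_right hlt (by positivity)
        _ = 1 := inv_mul_cancel₀ (by positivity)
    have : (n : ℝ) + 1 < |r - s|⁻¹ := by
      rw [← one_div, lt_div_iff₀ habs]
      linarith [mul_comm |r - s| ((n : ℝ) + 1)]
    linarith
  exact ⟨n, Nat.lt_ceil.2 hn, rfl⟩

end LinftyLpAux

namespace LinftyLpAux

def u (r : ℝ) : ℕ → ℝ := (B r).indicator 1

lemma u_abs_le (r : ℝ) (n : ℕ) : |u r n| ≤ 1 := by
  unfold u
  by_cases h : n ∈ B r
  · rw [Set.indicator_of_mem h]; norm_num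
  · rw [Set.indicator_of_notMem h]; norm_num

lemma u_mem (r : ℝ) : Memℓp (u r) ⊤ := by
  apply memℓp_infty
  refine ⟨1, ?_⟩
  rintro y ⟨n, rfl⟩
  simpa [Real.norm_eq_abs] using u_abs_le r n

def U (r : ℝ) : X := ⟨u r, u_mem r⟩

lemma U_apply (r : ℝ) (n : ℕ) : U r n = (B r).indicator 1 n := rfl

lemma norm_U_le (r : ℝ) : ‖U r‖ ≤ 1 := by
  apply lp.norm_le_of_forall_le one_pos.le
  intro n
  exact (Real.norm_eq_abs _).trans_le (u_abs_le r n)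

variable (p : ℝ)

lemma abs_rpow_add_le (hp : 0 ≤ p) (a b : ℝ) :
    |a + b| ^ p ≤ 2 ^ p * (|a| ^ p + |b| ^ p) := by
  calc |a + b| ^ p ≤ (2 * max |a| |b|) ^ p := by
        apply Real.rpow_le_rpow (abs_nonneg _) _ hp
        calc |a + b| ≤ |a| + |b| := abs_add_le a b
          _ ≤ max |a| |b| + max |a| |b| := add_le_add (le_max_left _ _) (le_max_right _ _)
          _ = 2 * max |a| |b| := (two_mul _).symm
    _ = 2 ^ p * (max |a| |b|) ^ p := Real.mul_rpow (by norm_num) (le_max_of_le_left (abs_nonneg _))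
    _ ≤ 2 ^ p * (|a| ^ p + |b| ^ p) := by
        apply mul_le_mul_of_nonneg_left _ (Real.rpow_nonneg (by norm_num) _)
        rcases max_cases |a| |b| with ⟨h, _⟩ | ⟨h, _⟩ <;> rw [h]
        · exact le_add_of_nonneg_right (Real.rpow_nonneg (abs_nonneg _) _)
        · exact le_add_of_nonneg_left (Real.rpow_nonneg (abs_nonneg _) _)

def Pm (hp : 0 < p) : Submodule ℝ X where
  carrier := {x : X | Summable fun n => |x n| ^ p}
  zero_mem' := by
    simp only [Set.mem_setOf_eq, lp.coeFn_zero, Pi.zero_apply, abs_zero,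
      Real.zero_rpow hp.ne']
    exact summable_zero
  add_mem' := by
    intro a b ha hb
    simp only [Set.mem_setOf_eq, lp.coeFn_add, Pi.add_apply] at *
    apply Summable.of_nonneg_of_le (fun n => Real.rpow_nonneg (abs_nonneg _) _)
      (fun n => abs_rpow_add_le p hp.le (a n) (b n))
    exact ((ha.add hb).mul_left _)
  smul_mem' := by
    intro c a ha
    simp only [Set.mem_setOf_eq, lp.coeFn_smul, Pi.smul_apply, smul_eq_mul] at *
    have : (fun n => |c * a n| ^ p) = fun n => |c| ^ p * |a n| ^ p := by
      funext n
      rw [abs_mul, Real.mul_rpow (abs_nonneg _) (abs_nonneg _)]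
    rw [this]
    exact ha.mul_left _

lemma mem_Pm_iff (hp : 0 < p) (x : X) :
    x ∈ Pm p hp ↔ Summable fun n => |x n| ^ p := Iff.rfl

end LinftyLpAux

namespace LinftyLpAux

lemma core (p : ℝ) (hp : 0 < p) (c : ℝ →₀ ℝ) (hc : c ≠ 0) :
    (c.sum fun r a => a • U r) ∉ Pm p hp := by
  classical
  set x : X := c.sum fun r a => a • U r with hxdef
  have hsupp : c.support.Nonempty := Finsupp.support_nonempty_iff.2 hc
  obtain ⟨r₀, hr₀⟩ := hsupp
  have hcr₀ : c r₀ ≠ 0 := Finsupp.mem_support_iff.1 hr₀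
  -- the finite "bad" set
  have hNfin : (⋃ s ∈ (c.support.erase r₀ : Finset ℝ), (B r₀ ∩ B s)).Finite := by
    apply Set.Finite.biUnion (Finset.finite_toSet _)
    intro s hs
    exact B_inter_finite (Ne.symm (Finset.ne_of_mem_erase hs))
  set N := ⋃ s ∈ (c.support.erase r₀ : Finset ℝ), (B r₀ ∩ B s) with hN
  have hIinf : (B r₀ \ N).Infinite := (B_infinite r₀).diff hNfin
  -- coordinates of x on the good set
  have hxn : ∀ n ∈ B r₀ \ N, x n = c r₀ := by
    intro n hn
    have hcoe : (x : ℕ → ℝ) = ∑ r ∈ c.support, (c r • U r : X) := by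
      rw [hxdef, Finsupp.sum, lp.coeFn_sum]
    have : x n = ∑ r ∈ c.support, c r * u r n := by
      rw [hcoe]
      simp [lp.coeFn_smul, U]
      exact Finset.sum_apply _ _ _
    rw [this]
    rw [Finset.sum_eq_single_of_mem r₀ hr₀]
    · have : u r₀ n = 1 := Set.indicator_of_mem hn.1 1
      rw [this, mul_one]
    · intro s hs hsne
      have hnB : n ∉ B s := by
        intro hmem
        exact hn.2 (Set.mem_biUnion (Finset.mem_erase.2 ⟨hsne, hs⟩) ⟨hn.1, hmem⟩)
      rw [show u s n = 0 from Set.indicator_of_notMem hnB 1, mul_zero]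
  -- contradiction with summability
  intro hsum
  rw [mem_Pm_iff] at hsum
  have htend : Tendsto (fun n => |x n| ^ p) atTop (nhds 0) := hsum.tendsto_atTop_zero
  have hpos : 0 < |c r₀| ^ p := Real.rpow_pos_of_pos (abs_pos.2 hcr₀) p
  have hev : ∀ᶠ n in atTop, |x n| ^ p < |c r₀| ^ p :=
    htend.eventually (gt_mem_nhds hpos)
  have hfreq : ∃ᶠ n in atTop, n ∈ B r₀ \ N :=
    Nat.frequently_atTop_iff_infinite.2 hIinf
  obtain ⟨n, hn1, hn2⟩ := (hfreq.and_eventually hev).exists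
  rw [hxn n hn1] at hn2
  exact lt_irrefl _ hn2

end LinftyLpAux

namespace LinftyLpAux

lemma key (p : ℝ) (hp : 0 < p) (V : Submodule ℝ X) (hV : Module.rank ℝ V < 𝔠)
    (x : X) (ε : ℝ) (hε : 0 < ε) :
    ∃ e : X, dist e x < ε ∧ e ∉ Pm p hp ⊔ V := by
  by_contra hcon
  push_neg at hcon
  -- every perturbation lands in Q
  have hQ : ∀ r : ℝ, x + (ε / 2) • U r ∈ Pm p hp ⊔ V := by
    intro r
    apply hcon
    rw [dist_eq_norm, add_sub_cancel_left, norm_smul]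
    calc ‖ε / 2‖ * ‖U r‖ ≤ ‖ε / 2‖ * 1 :=
          mul_le_mul_of_nonneg_left (norm_U_le r) (norm_nonneg _)
      _ = ε / 2 := by rw [mul_one, Real.norm_eq_abs, abs_of_pos (by linarith)]
      _ < ε := by linarith
  have hdiff : ∀ r : ℝ, U r - U 0 ∈ Pm p hp ⊔ V := by
    intro r
    have h1 := (Pm p hp ⊔ V).sub_mem (hQ r) (hQ 0)
    have h2 : (x + (ε / 2) • U r) - (x + (ε / 2) • U 0) = (ε / 2) • (U r - U 0) := by
      rw [smul_sub]; abel
    rw [h2] at h1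
    have := (Pm p hp ⊔ V).smul_mem (ε / 2)⁻¹ h1
    rwa [smul_smul, inv_mul_cancel₀ (by positivity), one_smul] at this
  set π := (Pm p hp).mkQ with hπ
  set W := V.map π with hW
  -- all π (U r) lie in span {π (U 0)} ⊔ W
  have hmem : ∀ r : ℝ, π (U r) ∈ Submodule.span ℝ {π (U 0)} ⊔ W := by
    intro r
    have : π (U r) = π (U 0) + π (U r - U 0) := by rw [← map_add]; ring_nf
    rw [this]
    apply Submodule.add_mem
    · exact Submodule.mem_sup_left (Submodule.subset_span rfl)
    · obtain ⟨a, ha, b, hb, hab⟩ := Submodule.mem_sup.1 (hdiff r)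
      rw [← hab, map_add]
      have : π a = 0 := (Submodule.Quotient.mk_eq_zero _).2 ha
      rw [this, zero_add]
      exact Submodule.mem_sup_right ⟨b, hb, rfl⟩
  -- the family π ∘ U is linearly independent
  have li : LinearIndependent ℝ (fun r : ℝ => π (U r)) := by
    rw [linearIndependent_iff]
    intro l hl
    by_contra hl0
    apply core p hp l hl0
    rw [mem_Pm_iff]
    have : π (l.sum fun r a => a • U r) = 0 := by
      rw [map_finsuppSum]
      simpa [map_smul, Finsupp.linearCombination_apply] using hl
    have hker : (l.sum fun r a => a • U r) ∈ Pm p hp := by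
      rw [← Submodule.ker_mkQ (Pm p hp)]
      exact this
    exact hker
  -- cardinality contradiction
  have h1 : (𝔠 : Cardinal) ≤ Module.rank ℝ (Submodule.span ℝ {π (U 0)} ⊔ W : Submodule ℝ _) := by
    have hle : Submodule.span ℝ (Set.range fun r : ℝ => π (U r)) ≤
        Submodule.span ℝ {π (U 0)} ⊔ W := by
      rw [Submodule.span_le]
      rintro _ ⟨r, rfl⟩
      exact hmem r
    calc (𝔠 : Cardinal) = #ℝ := Cardinal.mk_real.symm
      _ = #(Set.range fun r : ℝ => π (U r)) := (Cardinal.mk_range_eq _ li.injective).symm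
      _ = Module.rank ℝ (Submodule.span ℝ (Set.range fun r : ℝ => π (U r))) := (rank_span li).symm
      _ ≤ _ := Submodule.rank_mono hle
  have h2 : Module.rank ℝ (Submodule.span ℝ {π (U 0)} ⊔ W : Submodule ℝ _) < 𝔠 := by
    calc Module.rank ℝ (Submodule.span ℝ {π (U 0)} ⊔ W : Submodule ℝ _)
        ≤ Module.rank ℝ (Submodule.span ℝ {π (U 0)} : Submodule ℝ _) + Module.rank ℝ W :=
          Submodule.rank_add_le_rank_add_rank _ _
      _ < 𝔠 := by
          apply Cardinal.add_lt_of_lt Cardinal.aleph0_le_continuum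
          · apply lt_of_le_of_lt (rank_span_le _)
            rw [Cardinal.mk_singleton]
            exact lt_of_lt_of_le Cardinal.one_lt_aleph0 Cardinal.aleph0_le_continuum
          · exact lt_of_le_of_lt (rank_map_le _ _) hV
  exact absurd (lt_of_le_of_lt h1 h2) (lt_irrefl _)

end LinftyLpAux

namespace LinftyLpAux

lemma wf_choice {ι M : Type*} [LinearOrder ι] [WellFoundedLT ι] [Inhabited M]
    (Φ : ι → (ι → M) → M → Prop)
    (hmono : ∀ i (F G : ι → M) e, (∀ j, j < i → F j = G j) → Φ i F e → Φ i G e)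
    (h : ∀ i F, ∃ e, Φ i F e) :
    ∃ F : ι → M, ∀ i, Φ i F (F i) := by
  have wf : WellFounded ((· < ·) : ι → ι → Prop) := wellFounded_lt
  set body : ∀ i, (∀ j, j < i → M) → M := fun i IH =>
    (h i (fun j => if hj : j < i then IH j hj else default)).choose with hbody
  set F := wf.fix body with hF
  have hFeq : ∀ i, F i = body i (fun j _ => F j) := fun i => wf.fix_eq body i
  refine ⟨F, fun i => ?_⟩
  have hspec := (h i (fun j => if hj : j < i then F j else default)).choose_spec
  have hmain : Φ i (fun j => if hj : j < i then F j else default) (F i) := by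
    rw [hFeq i]; exact hspec
  exact hmono i _ F _ (fun j hj => by simp [hj]) hmain

end LinftyLpAux

namespace LinftyLpAux

lemma mk_X_le : #X ≤ 𝔠 := by
  have hinj : Function.Injective (fun x : X => (x : ℕ → ℝ)) := by
    intro a b hab
    exact Subtype.coe_injective hab
  calc #X ≤ #(ℕ → ℝ) := Cardinal.mk_le_of_injective hinj
    _ = 𝔠 := by
      rw [Cardinal.mk_arrow, Cardinal.mk_real, Cardinal.mk_denumerable]
      simp [Cardinal.continuum_power_aleph0]

theorem main (p : ℝ) (hp : 0 < p) :
    ∃ E : Submodule ℝ X, Dense (E : Set X) ∧ Module.rank ℝ E = 𝔠 ∧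
      ∀ f ∈ E, f ≠ 0 → ¬ Summable (fun n => |f n| ^ p) := by
  classical
  set ι := (𝔠 : Cardinal).ord.ToType with hι
  haveI : Inhabited X := ⟨0⟩
  -- a surjection from ι onto X × ℕ
  have hcard : #(X × ℕ) ≤ #ι := by
    rw [Cardinal.mk_ord_toType, Cardinal.mk_prod]
    simp only [Cardinal.mk_denumerable, Cardinal.lift_uzero, Cardinal.lift_aleph0]
    calc #X * ℵ₀ ≤ 𝔠 * 𝔠 := mul_le_mul' mk_X_le Cardinal.aleph0_le_continuum
      _ = 𝔠 := Cardinal.mul_eq_self Cardinal.aleph0_le_continuum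
  obtain ⟨emb⟩ := Cardinal.le_def _ _ |>.1 hcard
  set σ : ι → X × ℕ := Function.invFun emb with hσ
  have hσsurj : Function.Surjective σ := Function.invFun_surjective emb.injective
  -- initial segments of ι are small
  have hseg : ∀ i : ι, #(Set.Iio i) < 𝔠 := by
    intro i
    exact Cardinal.card_typein_toType_lt 𝔠 i
  -- transfinite construction
  set Φ : ι → (ι → X) → X → Prop := fun i F e =>
    dist e (σ i).1 < 1 / ((σ i).2 + 1) ∧
      e ∉ Pm p hp ⊔ Submodule.span ℝ (F '' Set.Iio i) with hΦ
  have hmono : ∀ i (F G : ι → X) e, (∀ j, j < i → F j = G j) → Φ i F e → Φ i G e := by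
    intro i F G e hFG ⟨h1, h2⟩
    refine ⟨h1, ?_⟩
    have : F '' Set.Iio i = G '' Set.Iio i :=
      Set.image_congr fun j hj => hFG j hj
    rwa [← this]
  have hex : ∀ i F, ∃ e, Φ i F e := by
    intro i F
    have hrank : Module.rank ℝ (Submodule.span ℝ (F '' Set.Iio i)) < 𝔠 := by
      apply lt_of_le_of_lt (rank_span_le _)
      exact lt_of_le_of_lt (Cardinal.mk_image_le) (hseg i)
    exact key p hp _ hrank (σ i).1 _ (by positivity)
  obtain ⟨F, hF⟩ := wf_choice Φ hmono hex
  -- the combination lemma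
  have hcombo : ∀ c : ι →₀ ℝ, (c.sum fun j a => a • F j) ∈ Pm p hp → c = 0 := by
    intro c hcmem
    by_contra hc0
    have hsupp : c.support.Nonempty := Finsupp.support_nonempty_iff.2 hc0
    set i := c.support.max' hsupp with hidef
    have hi : c i ≠ 0 := Finsupp.mem_support_iff.1 (c.support.max'_mem hsupp)
    have hsum : (c.sum fun j a => a • F j) = c i • F i + ∑ j ∈ c.support.erase i, c j • F j := by
      rw [Finsupp.sum, ← Finset.add_sum_erase _ _ (c.support.max'_mem hsupp)]
    have herase : (∑ j ∈ c.support.erase i, c j • F j) ∈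
        Submodule.span ℝ (F '' Set.Iio i) := by
      apply Submodule.sum_mem
      intro j hj
      have hji : j < i := by
        rcases Finset.mem_erase.1 hj with ⟨hne, hmem⟩
        exact lt_of_le_of_ne (c.support.le_max' j hmem) hne
      exact Submodule.smul_mem _ _ (Submodule.subset_span ⟨j, hji, rfl⟩)
    have hFi : F i ∈ Pm p hp ⊔ Submodule.span ℝ (F '' Set.Iio i) := by
      have hmem : c i • F i ∈ Pm p hp ⊔ Submodule.span ℝ (F '' Set.Iio i) := by
        have : c i • F i = (c.sum fun j a => a • F j) - ∑ j ∈ c.support.erase i, c j • F j := by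
          rw [hsum]; abel
        rw [this]
        exact Submodule.sub_mem _ (Submodule.mem_sup_left hcmem)
          (Submodule.mem_sup_right herase)
      have := Submodule.smul_mem _ (c i)⁻¹ hmem
      rwa [smul_smul, inv_mul_cancel₀ hi, one_smul] at this
    exact (hF i).2 hFi
  -- linear independence
  have li : LinearIndependent ℝ F := by
    rw [linearIndependent_iff]
    intro l hl
    apply hcombo
    rw [Finsupp.linearCombination_apply] at hl
    rw [hl]
    exact (Pm p hp).zero_mem
  refine ⟨Submodule.span ℝ (Set.range F), ?_, ?_, ?_⟩
  · -- density
    rw [Metric.dense_iff]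
    intro x ε hε
    obtain ⟨m, hm⟩ := exists_nat_one_div_lt hε
    obtain ⟨i, hi⟩ := hσsurj (x, m)
    refine ⟨F i, ?_, Submodule.subset_span (Set.mem_range_self i)⟩
    rw [Metric.mem_ball]
    have := (hF i).1
    rw [hi] at this
    exact lt_trans this hm
  · -- rank
    rw [rank_span li, Cardinal.mk_range_eq _ li.injective, hι, Cardinal.mk_ord_toType]
  · -- non-summability
    intro f hf hf0 hsum
    obtain ⟨c, hc⟩ := Finsupp.mem_span_range_iff_exists_finsupp.1 hf
    have : c = 0 := hcombo c (by rw [hc]; exact hsum)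
    rw [this] at hc
    simp at hc
    exact hf0 hc.symm

end LinftyLpAux

end

theorem linfty_setminus_lp_maximal_dense_lineable
    (p : ℝ) (hp : 0 < p) :
    ∃ E : Submodule ℝ (lp (fun _ : ℕ => ℝ) ⊤),
      Dense (E : Set (lp (fun _ : ℕ => ℝ) ⊤)) ∧
      Module.rank ℝ E = Cardinal.continuum ∧
      ∀ f ∈ E, f ≠ 0 → ¬ Summable (fun n => |f n| ^ p) := by
  exact LinftyLpAux.main p hp
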